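/- Let λ ∈ ℝ, T ∈ (0,∞], and let u : [0,T) × S¹ → ℝ be C³ in θ and C¹ in t (with the mixed partial derivatives u_tθ, u_tθθ continuous) solving the μ-λ equation with momentum m(t,θ) = σ(t) − u_θθ(t,θ), where σ(t) = ∫₀¹ u(t,θ) dθ. Then: (i) σ'(t) = 0 for all t, so σ is constant; and (ii) for all (t,θ) ∈ [0,T) × S¹, u_tθ + u u_θθ + ((λ−1)/2) u_θ² − λσu = I(t), where I(t) = ((λ−3)/2) E(t) − λσ² and E(t) = ∫₀¹ u_θ(t,θ)² dθ. -/

import Mathlib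

open Set MeasureTheory intervalIntegral

/-- Uniqueness of derivatives within a set with unique diff. -/
lemma stmt3_deriv_unique {f : ℝ → ℝ} {d₁ d₂ : ℝ} {s : Set ℝ} {x : ℝ}
    (hu : UniqueDiffWithinAt ℝ s x) (h1 : HasDerivWithinAt f d₁ s x)
    (h2 : HasDerivWithinAt f d₂ s x) : d₁ = d₂ := by
  rw [← h1.derivWithin hu, ← h2.derivWithin hu]

/-- Differentiation under the interval integral, within a compact convex set. -/
lemma stmt3_key (K : Set ℝ) (hK : IsCompact K) (hKc : Convex ℝ K)
    (v vt : ℝ → ℝ → ℝ) (a b : ℝ)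
    (hv : ∀ θ : ℝ, ∀ s ∈ K, HasDerivWithinAt (fun s => v s θ) (vt s θ) K s)
    (hvtc : ContinuousOn (fun p : ℝ × ℝ => vt p.1 p.2) (K ×ˢ (univ : Set ℝ)))
    (hvi : ∀ s ∈ K, IntervalIntegrable (v s) volume a b)
    (hvti : ∀ s ∈ K, IntervalIntegrable (vt s) volume a b)
    (t : ℝ) (ht : t ∈ K) :
    HasDerivWithinAt (fun s => ∫ φ in a..b, v s φ) (∫ φ in a..b, vt t φ) K t := by
  rw [hasDerivWithinAt_iff_isLittleO]
  rw [Asymptotics.isLittleO_iff]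
  intro c hc
  set ε : ℝ := c / (|b - a| + 1) with hε
  have habs : (0:ℝ) < |b - a| + 1 := by positivity
  have hεpos : 0 < ε := div_pos hc habs
  have hcomp : IsCompact (K ×ˢ uIcc a b) := hK.prod isCompact_uIcc
  have hvtc' : ContinuousOn (fun p : ℝ × ℝ => vt p.1 p.2) (K ×ˢ uIcc a b) :=
    hvtc.mono (prod_mono_right (subset_univ _))
  have huc := hcomp.uniformContinuousOn_of_continuous hvtc'
  rw [Metric.uniformContinuousOn_iff_le] at huc
  obtain ⟨δ, hδpos, hδ⟩ := huc ε hεpos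
  have hball : Metric.closedBall t δ ∈ nhdsWithin t K :=
    mem_nhdsWithin_of_mem_nhds (Metric.closedBall_mem_nhds t hδpos)
  filter_upwards [hball, self_mem_nhdsWithin] with s hsball hsK
  set S : Set ℝ := K ∩ Metric.closedBall t δ with hS
  have hSc : Convex ℝ S := hKc.inter (convex_closedBall t δ)
  have htS : t ∈ S := ⟨ht, Metric.mem_closedBall_self hδpos.le⟩
  have hsS : s ∈ S := ⟨hsK, hsball⟩
  have hpt : ∀ θ ∈ uIoc a b, ‖v s θ - v t θ - (s - t) * vt t θ‖ ≤ ε * ‖s - t‖ := by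
    intro θ hθ
    have hθ' : θ ∈ uIcc a b := uIoc_subset_uIcc hθ
    have hmvt := hSc.norm_image_sub_le_of_norm_hasDerivWithin_le
      (f := fun c => v c θ - c * vt t θ) (f' := fun c => vt c θ - vt t θ) (C := ε)
      (fun x hx => ((hv θ x hx.1).mono inter_subset_left).sub
        (by simpa using (hasDerivWithinAt_id x S).mul_const (vt t θ)))
      (fun x hx => by
        have := hδ (x, θ) ⟨hx.1, hθ'⟩ (t, θ) ⟨ht, hθ'⟩ ?_
        · simpa [Real.dist_eq] using this
        · simp only [Prod.dist_eq, dist_self]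
          simpa [Real.dist_eq] using (by simpa [Real.dist_eq] using hx.2 : dist x t ≤ δ))
      htS hsS
    calc ‖v s θ - v t θ - (s - t) * vt t θ‖
        = ‖(v s θ - s * vt t θ) - (v t θ - t * vt t θ)‖ := by ring_nf
      _ ≤ ε * ‖s - t‖ := hmvt
  have hint : (∫ φ in a..b, v s φ) - (∫ φ in a..b, v t φ) - (s - t) • (∫ φ in a..b, vt t φ)
      = ∫ φ in a..b, (v s φ - v t φ - (s - t) * vt t φ) := by
    rw [smul_eq_mul, ← intervalIntegral.integral_const_mul,
      ← intervalIntegral.integral_sub (hvi s hsK) (hvi t ht),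
      ← intervalIntegral.integral_sub ((hvi s hsK).sub (hvi t ht))
        ((hvti t ht).const_mul (s - t))]
  rw [hint]
  calc ‖∫ φ in a..b, (v s φ - v t φ - (s - t) * vt t φ)‖
      ≤ ε * ‖s - t‖ * |b - a| :=
        intervalIntegral.norm_integral_le_of_norm_le_const hpt
    _ ≤ c * ‖s - t‖ := by
        rw [hε, div_mul_eq_mul_div, div_mul_eq_mul_div, div_le_iff₀ habs]
        nlinarith [norm_nonneg (s - t), hc.le, abs_nonneg (b - a)]


/-- for solutions of the μ-λ equation with m = σ(t) - u_θθ, the mean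
σ(t) = ∫₀¹ u is constant, and the equation can be integrated once in θ to give
u_tθ + u u_θθ + ((λ-1)/2) u_θ² - λσu = I(t) with I(t) = ((λ-3)/2) E(t) - λσ². -/
theorem stmt_3 (lam : ℝ) (T : EReal) (hT : 0 < T)
    (J : Set ℝ) (hJ : J = {t : ℝ | 0 ≤ t ∧ (t : EReal) < T})
    (u ut uθ utθ uθθ utθθ uθθθ : ℝ → ℝ → ℝ) (σd : ℝ → ℝ)
    (huper : ∀ t ∈ J, ∀ θ : ℝ, u t (θ + 1) = u t θ)
    -- u is C³ in θ
    (huθ : ∀ t ∈ J, ∀ θ : ℝ, HasDerivAt (u t) (uθ t θ) θ)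
    (huθθ : ∀ t ∈ J, ∀ θ : ℝ, HasDerivAt (uθ t) (uθθ t θ) θ)
    (huθθθ : ∀ t ∈ J, ∀ θ : ℝ, HasDerivAt (uθθ t) (uθθθ t θ) θ)
    (huθθθc : ∀ t ∈ J, Continuous (uθθθ t))
    -- u is C¹ in t, with continuous mixed partials u_t, u_tθ, u_tθθ
    (hut : ∀ θ : ℝ, ∀ t ∈ J, HasDerivWithinAt (fun s => u s θ) (ut t θ) J t)
    (hutθ : ∀ θ : ℝ, ∀ t ∈ J, HasDerivWithinAt (fun s => uθ s θ) (utθ t θ) J t)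
    (hutθθ : ∀ θ : ℝ, ∀ t ∈ J, HasDerivWithinAt (fun s => uθθ s θ) (utθθ t θ) J t)
    (hutc : ContinuousOn (fun p : ℝ × ℝ => ut p.1 p.2) (J ×ˢ univ))
    (hutθc : ContinuousOn (fun p : ℝ × ℝ => utθ p.1 p.2) (J ×ˢ univ))
    (hutθθc : ContinuousOn (fun p : ℝ × ℝ => utθθ p.1 p.2) (J ×ˢ univ))
    -- σ(t) = ∫₀¹ u(t,θ) dθ is differentiable with derivative σd t
    (hσd : ∀ t ∈ J, HasDerivWithinAt (fun s => ∫ φ in (0:ℝ)..1, u s φ) (σd t) J t)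
    -- the μ-λ equation m_t + u m_θ + λ u_θ m = 0 with m = σ(t) - u_θθ
    (hPDE : ∀ t ∈ J, ∀ θ : ℝ,
      (σd t - utθθ t θ) + u t θ * (-(uθθθ t θ))
        + lam * uθ t θ * ((∫ φ in (0:ℝ)..1, u t φ) - uθθ t θ) = 0) :
    (∀ t ∈ J, σd t = 0) ∧
    (∀ t ∈ J, (∫ φ in (0:ℝ)..1, u t φ) = ∫ φ in (0:ℝ)..1, u 0 φ) ∧
    (∀ t ∈ J, ∀ θ : ℝ,
      utθ t θ + u t θ * uθθ t θ + (lam - 1) / 2 * uθ t θ ^ 2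
          - lam * (∫ φ in (0:ℝ)..1, u t φ) * u t θ
        = (lam - 3) / 2 * (∫ φ in (0:ℝ)..1, uθ t φ ^ 2)
            - lam * (∫ φ in (0:ℝ)..1, u t φ) ^ 2) := by
  -- basic facts about J
  have hJ0 : (0:ℝ) ∈ J := by rw [hJ]; exact ⟨le_refl 0, by exact_mod_cast hT⟩
  have hJconv : Convex ℝ J := by
    rw [hJ]
    intro x hx y hy a b ha hb hab
    refine ⟨add_nonneg (mul_nonneg ha hx.1) (mul_nonneg hb hy.1), ?_⟩
    have h1 : a • x + b • y ≤ max x y := by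
      rcases le_total x y with h | h
      · calc a*x + b*y ≤ a*y + b*y := by nlinarith
          _ = y := by linear_combination y * hab
          _ ≤ max x y := le_max_right x y
      · calc a*x + b*y ≤ a*x + b*x := by nlinarith
          _ = x := by linear_combination x * hab
          _ ≤ max x y := le_max_left x y
    calc ((a • x + b • y : ℝ) : EReal) ≤ ((max x y : ℝ) : EReal) := by exact_mod_cast h1
      _ < T := by
        rcases max_cases x y with ⟨h, _⟩ | ⟨h, _⟩ <;> rw [h]
        · exact hx.2
        · exact hy.2
  have hnext : ∀ t ∈ J, ∃ t₁ : ℝ, t < t₁ ∧ 0 < t₁ ∧ Icc (0:ℝ) t₁ ⊆ J ∧ t ∈ Icc (0:ℝ) t₁ := by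
    intro t ht
    rw [hJ] at ht
    obtain ⟨t₁, h1, h2⟩ := EReal.lt_iff_exists_real_btwn.1 ht.2
    have h1' : t < t₁ := by exact_mod_cast h1
    refine ⟨t₁, h1', lt_of_le_of_lt ht.1 h1', ?_, ⟨ht.1, h1'.le⟩⟩
    intro c hc
    rw [hJ]
    exact ⟨hc.1, lt_of_le_of_lt (by exact_mod_cast hc.2) h2⟩
  -- continuity in θ
  have hcu : ∀ t ∈ J, Continuous (u t) :=
    fun t ht => Differentiable.continuous (fun θ => (huθ t ht θ).differentiableAt)
  have hcuθ : ∀ t ∈ J, Continuous (uθ t) :=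
    fun t ht => Differentiable.continuous (fun θ => (huθθ t ht θ).differentiableAt)
  have hcuθθ : ∀ t ∈ J, Continuous (uθθ t) :=
    fun t ht => Differentiable.continuous (fun θ => (huθθθ t ht θ).differentiableAt)
  have hcutθ : ∀ t ∈ J, Continuous (utθ t) := by
    intro t ht
    have h1 : Continuous (fun θ : ℝ => ((t, θ) : ℝ × ℝ)) := continuous_const.prodMk continuous_id
    have h2 : ContinuousOn (fun θ : ℝ => utθ t θ) univ :=
      hutθc.comp h1.continuousOn
        (fun θ _ => show ((t, θ) : ℝ × ℝ) ∈ J ×ˢ univ from ⟨ht, trivial⟩)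
    exact continuousOn_univ.1 h2
  have hcutθθ : ∀ t ∈ J, Continuous (utθθ t) := by
    intro t ht
    have h1 : Continuous (fun θ : ℝ => ((t, θ) : ℝ × ℝ)) := continuous_const.prodMk continuous_id
    have h2 : ContinuousOn (fun θ : ℝ => utθθ t θ) univ :=
      hutθθc.comp h1.continuousOn
        (fun θ _ => show ((t, θ) : ℝ × ℝ) ∈ J ×ˢ univ from ⟨ht, trivial⟩)
    exact continuousOn_univ.1 h2
  -- periodicity
  have hval : ∀ t ∈ J, u t 1 = u t 0 := fun t ht => by simpa using huper t ht 0
  have hperθ : ∀ t ∈ J, ∀ θ : ℝ, uθ t (θ + 1) = uθ t θ := by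
    intro t ht θ
    have h1 : HasDerivAt (fun x : ℝ => u t (x + 1)) (uθ t (θ + 1) * 1) θ :=
      (huθ t ht (θ + 1)).comp θ ((hasDerivAt_id θ).add_const 1)
    have h2 : HasDerivAt (fun x : ℝ => u t (x + 1)) (uθ t θ) θ := by
      have heq : (fun x : ℝ => u t (x + 1)) = u t := funext fun x => huper t ht x
      rw [heq]; exact huθ t ht θ
    simpa using h1.unique h2
  have hvalθ : ∀ t ∈ J, uθ t 1 = uθ t 0 := fun t ht => by simpa using hperθ t ht 0
  have hperθθ : ∀ t ∈ J, ∀ θ : ℝ, uθθ t (θ + 1) = uθθ t θ := by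
    intro t ht θ
    have h1 : HasDerivAt (fun x : ℝ => uθ t (x + 1)) (uθθ t (θ + 1) * 1) θ :=
      (huθθ t ht (θ + 1)).comp θ ((hasDerivAt_id θ).add_const 1)
    have h2 : HasDerivAt (fun x : ℝ => uθ t (x + 1)) (uθθ t θ) θ := by
      have heq : (fun x : ℝ => uθ t (x + 1)) = uθ t := funext fun x => hperθ t ht x
      rw [heq]; exact huθθ t ht θ
    simpa using h1.unique h2
  have hvalθθ : ∀ t ∈ J, uθθ t 1 = uθθ t 0 := fun t ht => by simpa using hperθθ t ht 0
  -- FTC in θ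
  have i1 : ∀ t ∈ J, ∀ θ : ℝ, (∫ φ in (0:ℝ)..θ, uθ t φ) = u t θ - u t 0 := by
    intro t ht θ
    exact integral_eq_sub_of_hasDerivAt (fun x _ => huθ t ht x)
      ((hcuθ t ht).intervalIntegrable _ _)
  have i2 : ∀ t ∈ J, ∀ θ : ℝ, (∫ φ in (0:ℝ)..θ, uθθ t φ) = uθ t θ - uθ t 0 := by
    intro t ht θ
    exact integral_eq_sub_of_hasDerivAt (fun x _ => huθθ t ht x)
      ((hcuθθ t ht).intervalIntegrable _ _)
  have i3 : ∀ t ∈ J, ∀ θ : ℝ, (∫ φ in (0:ℝ)..θ, uθ t φ * uθθ t φ)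
      = uθ t θ ^ 2 / 2 - uθ t 0 ^ 2 / 2 := by
    intro t ht θ
    apply integral_eq_sub_of_hasDerivAt (f := fun φ => uθ t φ ^ 2 / 2)
    · intro x _
      have h := ((huθθ t ht x).fun_pow 2).div_const 2
      refine h.congr_deriv ?_
      norm_num; ring
    · exact ((hcuθ t ht).mul (hcuθθ t ht)).intervalIntegrable _ _
  have i4 : ∀ t ∈ J, ∀ θ : ℝ, (∫ φ in (0:ℝ)..θ, u t φ * uθθθ t φ)
      = (u t θ * uθθ t θ - uθ t θ ^ 2 / 2) - (u t 0 * uθθ t 0 - uθ t 0 ^ 2 / 2) := by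
    intro t ht θ
    apply integral_eq_sub_of_hasDerivAt (f := fun φ => u t φ * uθθ t φ - uθ t φ ^ 2 / 2)
    · intro x _
      have h := ((huθ t ht x).fun_mul (huθθθ t ht x)).fun_sub (((huθθ t ht x).fun_pow 2).div_const 2)
      refine h.congr_deriv ?_
      norm_num; ring
    · exact ((hcu t ht).mul (huθθθc t ht)).intervalIntegrable _ _
  have i5 : ∀ t ∈ J, (∫ φ in (0:ℝ)..1, u t φ * uθθ t φ) = -∫ φ in (0:ℝ)..1, uθ t φ ^ 2 := by
    intro t ht
    have h0 : (∫ φ in (0:ℝ)..1, (uθ t φ ^ 2 + u t φ * uθθ t φ)) = 0 := by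
      rw [integral_eq_sub_of_hasDerivAt (f := fun φ => u t φ * uθ t φ)
        (fun x _ => by
          have h := (huθ t ht x).fun_mul (huθθ t ht x)
          refine h.congr_deriv ?_; ring)
        ((((hcuθ t ht).fun_pow 2).fun_add ((hcu t ht).fun_mul (hcuθθ t ht))).intervalIntegrable _ _)]
      rw [hval t ht, hvalθ t ht]; ring
    rw [integral_add (((hcuθ t ht).fun_pow 2).intervalIntegrable _ _)
      (((hcu t ht).fun_mul (hcuθθ t ht)).intervalIntegrable _ _)] at h0
    linarith
  -- differentiation under the integral
  have key0 : ∀ t ∈ J, (∫ φ in (0:ℝ)..1, utθ t φ) = 0 ∧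
      (∀ θ : ℝ, (∫ φ in (0:ℝ)..θ, utθθ t φ) = utθ t θ - utθ t 0) := by
    intro t ht
    obtain ⟨t₁, htt₁, ht₁pos, hKJ, htK⟩ := hnext t ht
    have hUD : UniqueDiffWithinAt ℝ (Icc (0:ℝ) t₁) t := uniqueDiffOn_Icc ht₁pos t htK
    constructor
    · have hd := stmt3_key (Icc (0:ℝ) t₁) isCompact_Icc (convex_Icc _ _) uθ utθ 0 1
        (fun θ s hs => (hutθ θ s (hKJ hs)).mono hKJ)
        (hutθc.mono (prod_mono_left hKJ))
        (fun s hs => (hcuθ s (hKJ hs)).intervalIntegrable _ _)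
        (fun s hs => (hcutθ s (hKJ hs)).intervalIntegrable _ _) t htK
      have hz : HasDerivWithinAt (fun s => ∫ φ in (0:ℝ)..1, uθ s φ) 0 (Icc (0:ℝ) t₁) t :=
        (hasDerivWithinAt_const t _ (0:ℝ)).congr
          (fun s hs => by rw [i1 s (hKJ hs) 1, hval s (hKJ hs), sub_self])
          (by rw [i1 t ht 1, hval t ht, sub_self])
      exact stmt3_deriv_unique hUD hd hz
    · intro θ
      have hd := stmt3_key (Icc (0:ℝ) t₁) isCompact_Icc (convex_Icc _ _) uθθ utθθ 0 θ
        (fun θ' s hs => (hutθθ θ' s (hKJ hs)).mono hKJ)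
        (hutθθc.mono (prod_mono_left hKJ))
        (fun s hs => (hcuθθ s (hKJ hs)).intervalIntegrable _ _)
        (fun s hs => (hcutθθ s (hKJ hs)).intervalIntegrable _ _) t htK
      have hg : HasDerivWithinAt (fun s => ∫ φ in (0:ℝ)..θ, uθθ s φ)
          (utθ t θ - utθ t 0) (Icc (0:ℝ) t₁) t :=
        (((hutθ θ t ht).mono hKJ).sub ((hutθ 0 t ht).mono hKJ)).congr
          (fun s hs => i2 s (hKJ hs) θ) (i2 t ht θ)
      exact stmt3_deriv_unique hUD hd hg
  -- u_tθ is periodic: value at 1 equals value at 0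
  have hvaltθ : ∀ t ∈ J, utθ t 1 = utθ t 0 := by
    intro t ht
    obtain ⟨t₁, htt₁, ht₁pos, hKJ, htK⟩ := hnext t ht
    have hUD : UniqueDiffWithinAt ℝ (Icc (0:ℝ) t₁) t := uniqueDiffOn_Icc ht₁pos t htK
    have h1 : HasDerivWithinAt (fun s => uθ s 1) (utθ t 1) (Icc (0:ℝ) t₁) t :=
      (hutθ 1 t ht).mono hKJ
    have h2 : HasDerivWithinAt (fun s => uθ s 1) (utθ t 0) (Icc (0:ℝ) t₁) t :=
      (((hutθ 0 t ht).mono hKJ)).congr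
        (fun s hs => hvalθ s (hKJ hs)) (hvalθ t ht)
    exact stmt3_deriv_unique hUD h1 h2
  -- rearranged PDE
  have hpde : ∀ t ∈ J, ∀ φ : ℝ, utθθ t φ
      = σd t - u t φ * uθθθ t φ + lam * (∫ φ in (0:ℝ)..1, u t φ) * uθ t φ
          - lam * (uθ t φ * uθθ t φ) := by
    intro t ht φ
    linear_combination -(hPDE t ht φ)
  -- PART 1 : σd = 0
  have part1 : ∀ t ∈ J, σd t = 0 := by
    intro t ht
    have e4 : (∫ φ in (0:ℝ)..1, u t φ * uθθθ t φ) = 0 := by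
      rw [i4 t ht 1, hval t ht, hvalθ t ht, hvalθθ t ht]; ring
    have e1 : (∫ φ in (0:ℝ)..1, uθ t φ) = 0 := by
      rw [i1 t ht 1, hval t ht, sub_self]
    have e3 : (∫ φ in (0:ℝ)..1, uθ t φ * uθθ t φ) = 0 := by
      rw [i3 t ht 1, hvalθ t ht]; ring
    have h2 : (∫ φ in (0:ℝ)..1, utθθ t φ) = σd t := by
      rw [integral_congr (g := fun φ => σd t - u t φ * uθθθ t φ
        + lam * (∫ φ in (0:ℝ)..1, u t φ) * uθ t φ - lam * (uθ t φ * uθθ t φ))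
        (fun φ _ => hpde t ht φ)]
      rw [integral_sub (((intervalIntegrable_const.sub
            (((hcu t ht).fun_mul (huθθθc t ht)).intervalIntegrable _ _)).add
            ((continuous_const.fun_mul (hcuθ t ht)).intervalIntegrable _ _)))
          ((continuous_const.fun_mul ((hcuθ t ht).fun_mul (hcuθθ t ht))).intervalIntegrable _ _),
        integral_add (intervalIntegrable_const.sub
            (((hcu t ht).fun_mul (huθθθc t ht)).intervalIntegrable _ _))
          ((continuous_const.fun_mul (hcuθ t ht)).intervalIntegrable _ _),
        integral_sub intervalIntegrable_const
          (((hcu t ht).fun_mul (huθθθc t ht)).intervalIntegrable _ _),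
        intervalIntegral.integral_const_mul, intervalIntegral.integral_const_mul, intervalIntegral.integral_const, e4, e1, e3]
      simp
    have h3 : (∫ φ in (0:ℝ)..1, utθθ t φ) = 0 := by
      rw [(key0 t ht).2 1, hvaltθ t ht, sub_self]
    rw [h3] at h2; exact h2.symm
  -- PART 2 : σ is constant
  have part2 : ∀ t ∈ J, (∫ φ in (0:ℝ)..1, u t φ) = ∫ φ in (0:ℝ)..1, u 0 φ := by
    intro t ht
    have hb := hJconv.norm_image_sub_le_of_norm_hasDerivWithin_le
      (f := fun s => ∫ φ in (0:ℝ)..1, u s φ) (f' := σd) (C := 0)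
      (fun x hx => hσd x hx)
      (fun x hx => by rw [part1 x hx]; simp) hJ0 ht
    have h0 : ‖(∫ φ in (0:ℝ)..1, u t φ) - ∫ φ in (0:ℝ)..1, u 0 φ‖ ≤ 0 := by
      simpa using hb
    exact sub_eq_zero.1 (norm_le_zero_iff.1 h0)
  refine ⟨part1, part2, ?_⟩
  -- PART 3
  intro t ht θ
  -- the function utθ + u uθθ + (lam-1)/2 uθ² - lam σ u is constant in θ
  have hH : ∀ θ' : ℝ,
      utθ t θ' + u t θ' * uθθ t θ' + (lam - 1) / 2 * uθ t θ' ^ 2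
          - lam * (∫ φ in (0:ℝ)..1, u t φ) * u t θ'
        = utθ t 0 + u t 0 * uθθ t 0 + (lam - 1) / 2 * uθ t 0 ^ 2
          - lam * (∫ φ in (0:ℝ)..1, u t φ) * u t 0 := by
    intro θ'
    have e5 := (key0 t ht).2 θ'
    have e2 : (∫ φ in (0:ℝ)..θ', utθθ t φ)
        = -((u t θ' * uθθ t θ' - uθ t θ' ^ 2 / 2) - (u t 0 * uθθ t 0 - uθ t 0 ^ 2 / 2))
          + lam * (∫ φ in (0:ℝ)..1, u t φ) * (u t θ' - u t 0)
          - lam * (uθ t θ' ^ 2 / 2 - uθ t 0 ^ 2 / 2) := by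
      rw [integral_congr (g := fun φ => σd t - u t φ * uθθθ t φ
        + lam * (∫ φ in (0:ℝ)..1, u t φ) * uθ t φ - lam * (uθ t φ * uθθ t φ))
        (fun φ _ => hpde t ht φ)]
      rw [integral_sub (((intervalIntegrable_const.sub
            (((hcu t ht).fun_mul (huθθθc t ht)).intervalIntegrable _ _)).add
            ((continuous_const.fun_mul (hcuθ t ht)).intervalIntegrable _ _)))
          ((continuous_const.fun_mul ((hcuθ t ht).fun_mul (hcuθθ t ht))).intervalIntegrable _ _),
        integral_add (intervalIntegrable_const.sub
            (((hcu t ht).fun_mul (huθθθc t ht)).intervalIntegrable _ _))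
          ((continuous_const.fun_mul (hcuθ t ht)).intervalIntegrable _ _),
        integral_sub intervalIntegrable_const
          (((hcu t ht).fun_mul (huθθθc t ht)).intervalIntegrable _ _),
        intervalIntegral.integral_const_mul, intervalIntegral.integral_const_mul, intervalIntegral.integral_const,
        i4 t ht θ', i1 t ht θ', i3 t ht θ', part1 t ht]
      simp
    rw [e2] at e5
    linear_combination -e5
  -- evaluate the constant by integrating over one period
  have hc : utθ t 0 + u t 0 * uθθ t 0 + (lam - 1) / 2 * uθ t 0 ^ 2
        - lam * (∫ φ in (0:ℝ)..1, u t φ) * u t 0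
      = (lam - 3) / 2 * (∫ φ in (0:ℝ)..1, uθ t φ ^ 2)
        - lam * (∫ φ in (0:ℝ)..1, u t φ) ^ 2 := by
    have hconst : (∫ φ in (0:ℝ)..1, (utθ t φ + u t φ * uθθ t φ
        + (lam - 1) / 2 * uθ t φ ^ 2 - lam * (∫ φ in (0:ℝ)..1, u t φ) * u t φ))
        = utθ t 0 + u t 0 * uθθ t 0 + (lam - 1) / 2 * uθ t 0 ^ 2
          - lam * (∫ φ in (0:ℝ)..1, u t φ) * u t 0 := by
      rw [integral_congr (g := fun _ => utθ t 0 + u t 0 * uθθ t 0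
        + (lam - 1) / 2 * uθ t 0 ^ 2 - lam * (∫ φ in (0:ℝ)..1, u t φ) * u t 0)
        (fun φ _ => hH φ), intervalIntegral.integral_const]
      simp
    rw [integral_sub ((((hcutθ t ht).fun_add ((hcu t ht).fun_mul (hcuθθ t ht))).fun_add
          (continuous_const.fun_mul ((hcuθ t ht).fun_pow 2))).intervalIntegrable _ _)
        ((continuous_const.fun_mul (hcu t ht)).intervalIntegrable _ _),
      integral_add (((hcutθ t ht).fun_add ((hcu t ht).fun_mul (hcuθθ t ht))).intervalIntegrable _ _)
        ((continuous_const.fun_mul ((hcuθ t ht).fun_pow 2)).intervalIntegrable _ _),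
      integral_add ((hcutθ t ht).intervalIntegrable _ _)
        (((hcu t ht).fun_mul (hcuθθ t ht)).intervalIntegrable _ _),
      intervalIntegral.integral_const_mul, intervalIntegral.integral_const_mul,
      (key0 t ht).1, i5 t ht] at hconst
    rw [← hconst]; ring
  exact (hH θ).trans hc
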